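/- Let σ_k, μ be absolutely continuous measures in W₂(ℝⁿ), P, P_k ∈ O(n) with P = [θ₁,…,θₙ], γ_k ∈ [0,1], and σ_{k+1} = ((1-γ_k)id + γ_k T^j_{σ_k,μ;P_k})_♯σ_k. Then Σ_{i=1}^{j} W₂²(σ_{k+1}^{θᵢ}, μ^{θᵢ}) ≤ ‖id - T^j_{σ_k,μ;P}‖²_{L²(σ_k)} + γ_k² ‖id - T^j_{σ_k,μ;P_k}‖²_{L²(σ_k)} - 2γ_k ⟨id - T^j_{σ_k,μ;P}, id - T^j_{σ_k,μ;P_k}⟩_{L²(σ_k)}. -/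

import Mathlib

open MeasureTheory
open scoped ENNReal RealInnerProductSpace

noncomputable section

abbrev Eu (n : ℕ) := EuclideanSpace ℝ (Fin n)

def W2sq {X : Type*} [MeasurableSpace X] [NormedAddCommGroup X] (σ μ : Measure X) : ℝ≥0∞ :=
  ⨅ (π : Measure (X × X)) (_ : π.map Prod.fst = σ ∧ π.map Prod.snd = μ),
    ∫⁻ p, (‖p.1 - p.2‖₊ : ℝ≥0∞) ^ 2 ∂π

def W2 {X : Type*} [MeasurableSpace X] [NormedAddCommGroup X] (σ μ : Measure X) : ℝ≥0∞ :=
  W2sq σ μ ^ (1/2 : ℝ)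

def cdf' (μ : Measure ℝ) (x : ℝ) : ℝ := (μ (Set.Iic x)).toReal

def qf (μ : Measure ℝ) (y : ℝ) : ℝ := sInf {z : ℝ | y ≤ cdf' μ z}

def otMap1d (σ μ : Measure ℝ) (x : ℝ) : ℝ := qf μ (cdf' σ x)

def proj {n : ℕ} (θ : Eu n) (x : Eu n) : ℝ := (inner ℝ x θ : ℝ)

def sliceOf {n : ℕ} (σ : Measure (Eu n)) (θ : Eu n) : Measure ℝ := σ.map (proj θ)

def sliceMap {n : ℕ} (σ μ : Measure (Eu n)) (θ : Fin n → Eu n) (j : ℕ) (x : Eu n) : Eu n :=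
  ∑ i : Fin n,
    (if (i : ℕ) < j then otMap1d (sliceOf σ (θ i)) (sliceOf μ (θ i)) (proj (θ i) x)
     else proj (θ i) x) • θ i

def singleSlice {n : ℕ} (σ μ : Measure (Eu n)) (θ : Eu n) (x : Eu n) : Eu n :=
  x + (otMap1d (sliceOf σ θ) (sliceOf μ θ) (proj θ x) - proj θ x) • θ

def FiniteSecondMoment {X : Type*} [MeasurableSpace X] [NormedAddCommGroup X]
    (μ : Measure X) : Prop :=
  ∫⁻ x, (‖x‖₊ : ℝ≥0∞) ^ 2 ∂μ < ⊤

section OneD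

variable (μ : Measure ℝ) [IsProbabilityMeasure μ]

lemma cdf'_eq_cdf : cdf' μ = ⇑(ProbabilityTheory.cdf μ) :=
  funext fun x => (ProbabilityTheory.cdf_eq_real μ x).symm

lemma monotone_cdf' : Monotone (cdf' μ) := by
  rw [cdf'_eq_cdf]; exact ProbabilityTheory.monotone_cdf μ

lemma measurable_cdf' : Measurable (cdf' μ) := (monotone_cdf' μ).measurable

lemma cdf'_nonneg (x : ℝ) : 0 ≤ cdf' μ x := ENNReal.toReal_nonneg

lemma cdf'_le_one (x : ℝ) : cdf' μ x ≤ 1 := by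
  rw [cdf'_eq_cdf]; exact ProbabilityTheory.cdf_le_one μ x

lemma ofReal_cdf' (x : ℝ) : ENNReal.ofReal (cdf' μ x) = μ (Set.Iic x) := by
  rw [cdf'_eq_cdf]; exact ProbabilityTheory.ofReal_cdf μ x

lemma cdf'_iInf_Ioi (x : ℝ) : ⨅ r : Set.Ioi x, cdf' μ r = cdf' μ x := by
  rw [cdf'_eq_cdf]; exact (ProbabilityTheory.cdf μ).iInf_Ioi_eq x

lemma continuous_cdf' [NullSingletonClass μ] : Continuous (cdf' μ) := by
  rw [cdf'_eq_cdf]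
  rw [continuous_iff_continuousAt]
  intro x
  have hm := (ProbabilityTheory.cdf μ).mono
  rw [hm.continuousAt_iff_leftLim_eq_rightLim, (ProbabilityTheory.cdf μ).rightLim_eq]
  have h0 : (ProbabilityTheory.cdf μ).measure {x} = 0 := by
    rw [ProbabilityTheory.measure_cdf]; exact measure_singleton x
  rw [StieltjesFunction.measure_singleton] at h0
  have h1 := hm.leftLim_le (le_refl x)
  have h2 : (ProbabilityTheory.cdf μ) x - Function.leftLim (⇑(ProbabilityTheory.cdf μ)) x ≤ 0 := by
    by_contra h
    push_neg at h
    exact absurd h0 (by simp [ENNReal.ofReal_eq_zero]; linarith)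
  linarith

variable {μ}

lemma tendsto_cdf'_atTop : Filter.Tendsto (cdf' μ) Filter.atTop (nhds 1) := by
  rw [cdf'_eq_cdf]; exact ProbabilityTheory.tendsto_cdf_atTop μ

lemma tendsto_cdf'_atBot : Filter.Tendsto (cdf' μ) Filter.atBot (nhds 0) := by
  rw [cdf'_eq_cdf]; exact ProbabilityTheory.tendsto_cdf_atBot μ

lemma qf_set_nonempty {y : ℝ} (hy : y < 1) : {z : ℝ | y ≤ cdf' μ z}.Nonempty := by
  obtain ⟨z, hz⟩ := ((tendsto_cdf'_atTop (μ := μ)).eventually_const_lt hy).exists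
  exact ⟨z, hz.le⟩

lemma qf_set_bddBelow {y : ℝ} (hy : 0 < y) : BddBelow {z : ℝ | y ≤ cdf' μ z} := by
  obtain ⟨w, hw⟩ := ((tendsto_cdf'_atBot (μ := μ)).eventually_lt_const hy).exists
  refine ⟨w, fun z hz => ?_⟩
  by_contra hlt
  push_neg at hlt
  have : cdf' μ z ≤ cdf' μ w := monotone_cdf' μ hlt.le
  exact absurd (le_trans hz this) (not_le.mpr hw)

lemma qf_le_iff {y z : ℝ} (h0 : 0 < y) (h1 : y < 1) :
    qf μ y ≤ z ↔ y ≤ cdf' μ z := by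
  constructor
  · intro h
    rw [← cdf'_iInf_Ioi μ z]
    rw [le_ciInf_iff ⟨0, by rintro a ⟨r, rfl⟩; exact cdf'_nonneg μ _⟩]
    rintro ⟨r, hr⟩
    have hlt : qf μ y < r := lt_of_le_of_lt h hr
    obtain ⟨w, hw, hwr⟩ := exists_lt_of_csInf_lt (qf_set_nonempty h1) hlt
    exact le_trans hw (monotone_cdf' μ hwr.le)
  · intro h
    exact csInf_le (qf_set_bddBelow h0) h

lemma monotoneOn_qf : MonotoneOn (qf μ) (Set.Ioo 0 1) := by
  intro a ha b hb hab
  exact le_csInf (qf_set_nonempty hb.2) fun z hz =>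
    csInf_le (qf_set_bddBelow ha.1) (le_trans hab hz)

/-- measure of sublevel sets of a continuous cdf -/
lemma measure_cdf'_le (hc : Continuous (cdf' μ)) [NullSingletonClass μ] {t : ℝ} (ht0 : 0 ≤ t) (ht1 : t ≤ 1) :
    μ {x | cdf' μ x ≤ t} = ENNReal.ofReal t := by
  rcases eq_or_lt_of_le ht1 with h1 | h1
  · have : {x | cdf' μ x ≤ t} = Set.univ := by
      ext x; simp only [Set.mem_setOf_eq, Set.mem_univ, iff_true]
      rw [h1]; exact cdf'_le_one μ x
    rw [this, measure_univ, h1]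
    simp
  rcases Set.eq_empty_or_nonempty {x | cdf' μ x ≤ t} with hA | hA
  · rw [hA, measure_empty]
    have ht0' : t = 0 := by
      by_contra h
      have htpos : 0 < t := lt_of_le_of_ne ht0 (Ne.symm h)
      obtain ⟨w, hw⟩ := ((tendsto_cdf'_atBot (μ := μ)).eventually_lt_const htpos).exists
      have hmem : w ∈ {x | cdf' μ x ≤ t} := hw.le
      rw [hA] at hmem
      exact absurd hmem (Set.notMem_empty w)
    simp [ht0']
  · have hbdd : BddAbove {x | cdf' μ x ≤ t} := by
      obtain ⟨b, hb⟩ := ((tendsto_cdf'_atTop (μ := μ)).eventually_const_lt h1).exists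
      refine ⟨b, fun x hx => ?_⟩
      by_contra hlt
      push_neg at hlt
      have : cdf' μ b ≤ cdf' μ x := monotone_cdf' μ hlt.le
      exact absurd (le_trans this hx) (not_le.mpr hb)
    have hclosed : IsClosed {x | cdf' μ x ≤ t} := isClosed_le hc continuous_const
    set s := sSup {x | cdf' μ x ≤ t} with hs
    have hmem : s ∈ {x | cdf' μ x ≤ t} := hclosed.csSup_mem hA hbdd
    have hle : cdf' μ s ≤ t := hmem
    have hge : t ≤ cdf' μ s := by
      rw [← cdf'_iInf_Ioi μ s]
      rw [le_ciInf_iff ⟨0, by rintro a ⟨r, rfl⟩; exact cdf'_nonneg μ _⟩]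
      rintro ⟨r, hr⟩
      by_contra hlt
      push_neg at hlt
      exact absurd (le_csSup hbdd hlt.le) (not_le.mpr hr)
    have heq : cdf' μ s = t := le_antisymm hle hge
    have hsub1 : Set.Iio s ⊆ {x | cdf' μ x ≤ t} := by
      intro x hx
      obtain ⟨a, ha, hxa⟩ := exists_lt_of_lt_csSup hA hx
      exact le_trans (monotone_cdf' μ hxa.le) ha
    have hsub2 : {x | cdf' μ x ≤ t} ⊆ Set.Iic s := fun x hx => le_csSup hbdd hx
    have h2 : μ (Set.Iic s) = ENNReal.ofReal t := by rw [← ofReal_cdf', heq]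
    refine le_antisymm (le_trans (measure_mono hsub2) h2.le) ?_
    calc ENNReal.ofReal t = μ (Set.Iic s) := h2.symm
      _ ≤ μ (Set.Iio s) + μ {s} := by
          rw [← Set.Iio_union_right]; exact measure_union_le _ _
      _ = μ (Set.Iio s) := by rw [measure_singleton]; simp
      _ ≤ _ := measure_mono hsub1

lemma cdf'_ae_Ioo (hc : Continuous (cdf' μ)) [NullSingletonClass μ] :
    ∀ᵐ x ∂μ, cdf' μ x ∈ Set.Ioo (0:ℝ) 1 := by
  have h0 : μ {x | cdf' μ x ≤ 0} = 0 := by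
    simpa using measure_cdf'_le hc (le_refl (0:ℝ)) zero_le_one
  have h1 : μ {x | cdf' μ x = 1} = 0 := by
    have key : ∀ ε : ℝ, 0 < ε → ε < 1 → μ {x | cdf' μ x = 1} ≤ ENNReal.ofReal ε := by
      intro ε hε hε1
      have hsub : {x | cdf' μ x = 1} ⊆ {x | cdf' μ x ≤ 1 - ε}ᶜ := by
        intro x hx
        simp only [Set.mem_compl_iff, Set.mem_setOf_eq, not_le]
        rw [Set.mem_setOf_eq.mp hx]; linarith
      refine le_trans (measure_mono hsub) ?_
      rw [measure_compl (measurableSet_le (measurable_cdf' μ) measurable_const) (measure_ne_top μ _)]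
      rw [measure_cdf'_le hc (by linarith) (by linarith), measure_univ]
      rw [← ENNReal.ofReal_one, ← ENNReal.ofReal_sub _ (by linarith)]
      simp
    refine le_antisymm (ENNReal.le_of_forall_pos_le_add fun ε hε _ => ?_) zero_le
    rw [zero_add]
    have hδ0 : 0 < min (ε:ℝ) 2⁻¹ := lt_min (by exact_mod_cast hε) (by norm_num)
    have hδ1 : min (ε:ℝ) 2⁻¹ < 1 := lt_of_le_of_lt (min_le_right _ _) (by norm_num)
    refine le_trans (key _ hδ0 hδ1) ?_
    calc ENNReal.ofReal (min (ε:ℝ) 2⁻¹) ≤ ENNReal.ofReal ε :=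
          ENNReal.ofReal_le_ofReal (min_le_left _ _)
      _ = (ε : ℝ≥0∞) := ENNReal.ofReal_coe_nnreal
  rw [MeasureTheory.ae_iff]
  refine measure_mono_null (fun x hx => ?_) (measure_union_null h0 h1)
  simp only [Set.mem_setOf_eq, Set.mem_Ioo, not_and_or, not_lt] at hx
  rcases hx with hx | hx
  · exact Or.inl hx
  · exact Or.inr (le_antisymm (cdf'_le_one μ x) hx)

lemma measurable_otMap1d (σ : Measure ℝ) [IsProbabilityMeasure σ] :
    Measurable (otMap1d σ μ) := by
  refine measurable_of_Iic fun c => ?_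
  have hset : otMap1d σ μ ⁻¹' Set.Iic c
      = cdf' σ ⁻¹' ({y | qf μ y ≤ c} ∩ Set.Icc 0 1) := by
    ext x
    simp only [Set.mem_preimage, Set.mem_Iic, Set.mem_inter_iff, Set.mem_setOf_eq, Set.mem_Icc,
      otMap1d]
    exact ⟨fun h => ⟨h, cdf'_nonneg σ x, cdf'_le_one σ x⟩, fun h => h.1⟩
  rw [hset]
  refine (measurable_cdf' σ) ?_
  have hdecomp : {y | qf μ y ≤ c} ∩ Set.Icc 0 1
      = ({y | qf μ y ≤ c} ∩ Set.Ioo 0 1) ∪ ({y | qf μ y ≤ c} ∩ Set.Icc 0 1 ∩ {0, 1}) := by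
    ext y
    simp only [Set.mem_inter_iff, Set.mem_union, Set.mem_Ioo, Set.mem_Icc, Set.mem_setOf_eq,
      Set.mem_insert_iff, Set.mem_singleton_iff]
    constructor
    · rintro ⟨hq, h0, h1⟩
      rcases eq_or_lt_of_le h0 with h | h
      · exact Or.inr ⟨⟨hq, h0, h1⟩, Or.inl h.symm⟩
      rcases eq_or_lt_of_le h1 with h' | h'
      · exact Or.inr ⟨⟨hq, h0, h1⟩, Or.inr h'⟩
      · exact Or.inl ⟨hq, h, h'⟩
    · rintro (⟨hq, h0, h1⟩ | ⟨⟨hq, h0, h1⟩, _⟩)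
      · exact ⟨hq, h0.le, h1.le⟩
      · exact ⟨hq, h0, h1⟩
  rw [hdecomp]
  refine MeasurableSet.union ?_ ?_
  · have hoc : Set.OrdConnected ({y | qf μ y ≤ c} ∩ Set.Ioo 0 1) := by
      constructor
      rintro a ⟨ha, ha'⟩ b ⟨hb, hb'⟩ z hz
      have hzI : z ∈ Set.Ioo (0:ℝ) 1 :=
        ⟨lt_of_lt_of_le ha'.1 hz.1, lt_of_le_of_lt hz.2 hb'.2⟩
      exact ⟨le_trans (monotoneOn_qf hzI hb' hz.2) hb, hzI⟩
    exact hoc.measurableSet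
  · exact (Set.Finite.subset (Set.toFinite ({0,1} : Set ℝ)) Set.inter_subset_right).measurableSet

/-- Monotone rearrangement: the 1d OT map pushes `σ` forward to `μ`. -/
theorem otMap1d_map (σ : Measure ℝ) [IsProbabilityMeasure σ] [NullSingletonClass σ] :
    σ.map (otMap1d σ μ) = μ := by
  have hc : Continuous (cdf' σ) := continuous_cdf' σ
  have hmeas : Measurable (otMap1d σ μ) := measurable_otMap1d σ
  have : IsProbabilityMeasure (σ.map (otMap1d σ μ)) :=
    Measure.isProbabilityMeasure_map hmeas.aemeasurable
  refine Measure.ext_of_Iic _ _ fun z => ?_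
  rw [Measure.map_apply hmeas measurableSet_Iic]
  have hae : σ (otMap1d σ μ ⁻¹' Set.Iic z) = σ {x | cdf' σ x ≤ cdf' μ z} := by
    refine measure_congr ?_
    have hI := cdf'_ae_Ioo (μ := σ) hc
    refine Filter.EventuallyEq.symm ?_
    filter_upwards [hI] with x hx
    show (x ∈ {x | cdf' σ x ≤ cdf' μ z}) = (x ∈ otMap1d σ μ ⁻¹' Set.Iic z)
    simp only [Set.mem_setOf_eq, Set.mem_preimage, Set.mem_Iic, otMap1d]
    rw [qf_le_iff hx.1 hx.2]
  rw [hae, measure_cdf'_le hc (cdf'_nonneg μ z) (cdf'_le_one μ z), ofReal_cdf']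

end OneD

section NDim

variable {n : ℕ}

lemma measurable_proj (θ : Eu n) : Measurable (proj θ) :=
  (continuous_id.inner (𝕜 := ℝ) continuous_const).measurable

lemma isProbabilityMeasure_sliceOf (σ : Measure (Eu n)) [IsProbabilityMeasure σ] (θ : Eu n) :
    IsProbabilityMeasure (sliceOf σ θ) :=
  Measure.isProbabilityMeasure_map (measurable_proj θ).aemeasurable

lemma noAtoms_sliceOf (σ : Measure (Eu n)) [IsProbabilityMeasure σ]
    (hac : σ ≪ volume) {θ : Eu n} (hθ : ‖θ‖ = 1) : NullSingletonClass (sliceOf σ θ) := by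
  constructor
  intro a
  rw [sliceOf, Measure.map_apply (measurable_proj θ) (measurableSet_singleton a)]
  refine hac ?_
  have hθ0 : θ ≠ 0 := by intro h; rw [h] at hθ; simp at hθ
  rcases Set.eq_empty_or_nonempty (proj θ ⁻¹' {a}) with h | ⟨x₀, hx₀⟩
  · simp [h]
  have hx₀' : proj θ x₀ = a := hx₀
  set K : Submodule ℝ (Eu n) := LinearMap.ker (innerSL ℝ θ : Eu n →ₗ[ℝ] ℝ) with hK
  have hKne : K ≠ ⊤ := by
    intro h
    have : θ ∈ K := by rw [h]; trivial
    rw [hK, LinearMap.mem_ker] at this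
    simp only [ContinuousLinearMap.coe_coe, innerSL_apply_apply] at this
    rw [real_inner_self_eq_norm_sq, hθ] at this
    norm_num at this
  have hset : proj θ ⁻¹' {a} = (fun x => -x₀ + x) ⁻¹' (K : Set (Eu n)) := by
    ext x
    simp only [Set.mem_preimage, Set.mem_singleton_iff, SetLike.mem_coe, hK, LinearMap.mem_ker,
      map_add, map_neg]
    simp only [ContinuousLinearMap.coe_coe, innerSL_apply_apply]
    rw [show (inner ℝ θ x : ℝ) = proj θ x from real_inner_comm x θ,
      show (inner ℝ θ x₀ : ℝ) = proj θ x₀ from real_inner_comm x₀ θ, hx₀']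
    constructor <;> intro h <;> linarith
  rw [hset, measure_preimage_add]
  exact Measure.addHaar_submodule volume K hKne

end NDim



section Helpers

lemma eLpNorm_two_eq {α : Type*} {m : MeasurableSpace α} {ν : Measure α} {E : Type*}
    [NormedAddCommGroup E] (f : α → E) :
    eLpNorm f 2 ν = (∫⁻ x, (‖f x‖₊ : ℝ≥0∞) ^ 2 ∂ν) ^ (1/2 : ℝ) := by
  rw [eLpNorm_eq_lintegral_rpow_enorm_toReal two_ne_zero ENNReal.ofNat_ne_top]
  have h2 : ((2:ℝ≥0∞)).toReal = (2:ℝ) := by norm_num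
  rw [h2]
  congr 1
  refine lintegral_congr fun x => ?_
  rw [show (2:ℝ) = ((2:ℕ):ℝ) by norm_num, ENNReal.rpow_natCast, enorm_eq_nnnorm]

lemma memLp_two_iff_lintegral {α : Type*} {m : MeasurableSpace α} {ν : Measure α} {E : Type*}
    [NormedAddCommGroup E] {f : α → E} (hf : AEStronglyMeasurable f ν) :
    MemLp f 2 ν ↔ (∫⁻ x, (‖f x‖₊ : ℝ≥0∞) ^ 2 ∂ν) < ⊤ := by
  constructor
  · rintro ⟨-, h⟩
    rw [eLpNorm_two_eq] at h
    by_contra htop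
    push_neg at htop
    rw [top_le_iff.mp htop, ENNReal.top_rpow_of_pos (by norm_num)] at h
    exact absurd h (lt_irrefl ⊤)
  · intro h
    refine ⟨hf, ?_⟩
    rw [eLpNorm_two_eq]
    exact ENNReal.rpow_lt_top_of_nonneg (by norm_num) h.ne

lemma memLp_smul_const {α : Type*} {m : MeasurableSpace α} {ν : Measure α} {c : α → ℝ}
    (hc : MemLp c 2 ν) {E : Type*} [NormedAddCommGroup E] [NormedSpace ℝ E] (v : E) :
    MemLp (fun x => c x • v) 2 ν := by
  refine MemLp.of_le_mul (c := ‖v‖) hc (hc.aestronglyMeasurable.smul aestronglyMeasurable_const)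
    (Filter.Eventually.of_forall fun x => ?_)
  rw [norm_smul, mul_comm]

lemma integrable_sq_norm_of_memLp {α : Type*} {m : MeasurableSpace α} {ν : Measure α} {E : Type*}
    [NormedAddCommGroup E] {f : α → E} (hf : MemLp f 2 ν) :
    Integrable (fun x => ‖f x‖ ^ 2) ν := by
  have h := hf.integrable_norm_rpow two_ne_zero ENNReal.ofNat_ne_top
  refine h.congr (Filter.Eventually.of_forall fun x => ?_)
  have h2 : ((2:ℝ≥0∞)).toReal = (2:ℝ) := by norm_num
  simp only [h2]
  rw [show (2:ℝ) = ((2:ℕ):ℝ) by norm_num, Real.rpow_natCast]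

lemma integrable_inner_of_memLp {α : Type*} {m : MeasurableSpace α} {ν : Measure α} {E : Type*}
    [NormedAddCommGroup E] [InnerProductSpace ℝ E] {f g : α → E}
    (hf : MemLp f 2 ν) (hg : MemLp g 2 ν) :
    Integrable (fun x => (inner ℝ (f x) (g x) : ℝ)) ν := by
  have hmul : Integrable (fun x => ‖f x‖ * ‖g x‖) ν := by
    have hpqr : (1:ℝ≥0∞)/1 = 1/2 + 1/2 := by
      rw [ENNReal.div_add_div_same, one_add_one_eq_two,
        ENNReal.div_self two_ne_zero ENNReal.ofNat_ne_top, div_one]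
    have h := (haveI : ENNReal.HolderTriple 2 2 1 := ⟨by rw [inv_one]; exact ENNReal.inv_two_add_inv_two⟩; hg.norm.smul hf.norm (p := 2) (q := 2) (r := 1))
    rw [memLp_one_iff_integrable] at h
    refine h.congr (Filter.Eventually.of_forall fun x => ?_)
    simp [Pi.smul_apply, smul_eq_mul]
  refine hmul.mono' (hf.aestronglyMeasurable.inner hg.aestronglyMeasurable)
    (Filter.Eventually.of_forall fun x => ?_)
  rw [Real.norm_eq_abs]
  exact abs_real_inner_le_norm _ _

lemma toReal_lintegral_sq_norm {α : Type*} {m : MeasurableSpace α} {ν : Measure α} {E : Type*}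
    [NormedAddCommGroup E] {f : α → E} (hf : AEStronglyMeasurable f ν) :
    (∫⁻ x, (‖f x‖₊ : ℝ≥0∞) ^ 2 ∂ν).toReal = ∫ x, ‖f x‖ ^ 2 ∂ν := by
  rw [integral_eq_lintegral_of_nonneg_ae (Filter.Eventually.of_forall fun x => by positivity)
    ((hf.norm.aemeasurable.pow_const 2).aestronglyMeasurable)]
  congr 1
  refine lintegral_congr fun x => ?_
  rw [← enorm_eq_nnnorm, ← ofReal_norm, ← ENNReal.ofReal_pow (norm_nonneg _)]

end Helpers

section NDim2

variable {n : ℕ} (σ μ : Measure (Eu n)) [IsProbabilityMeasure σ] [IsProbabilityMeasure μ]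

lemma measurable_sliceMap (θ : Fin n → Eu n) (j : ℕ) : Measurable (sliceMap σ μ θ j) := by
  unfold sliceMap
  refine Finset.measurable_sum _ (fun i _ => ?_)
  haveI := isProbabilityMeasure_sliceOf σ (θ i)
  haveI := isProbabilityMeasure_sliceOf μ (θ i)
  by_cases h : (i:ℕ) < j
  · simp only [if_pos h]
    exact ((measurable_otMap1d (μ := sliceOf μ (θ i)) (sliceOf σ (θ i))).comp
      (measurable_proj (θ i))).smul_const (θ i)
  · simp only [if_neg h]
    exact (measurable_proj (θ i)).smul_const (θ i)

lemma proj_sliceMap {θ : Fin n → Eu n} (hθ : Orthonormal ℝ θ) (j : ℕ) (i : Fin n) (x : Eu n) :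
    proj (θ i) (sliceMap σ μ θ j x)
      = if (i:ℕ) < j then otMap1d (sliceOf σ (θ i)) (sliceOf μ (θ i)) (proj (θ i) x)
        else proj (θ i) x := by
  unfold sliceMap
  show (inner ℝ (∑ l : Fin n, _ • θ l) (θ i) : ℝ) = _
  rw [real_inner_comm]
  exact hθ.inner_right_fintype _ i

lemma sub_sliceMap_eq (hn : 0 < n) {θ : Fin n → Eu n} (hθ : Orthonormal ℝ θ) (j : ℕ) (x : Eu n) :
    x - sliceMap σ μ θ j x
      = ∑ i : Fin n, (if (i:ℕ) < j then
            proj (θ i) x - otMap1d (sliceOf σ (θ i)) (sliceOf μ (θ i)) (proj (θ i) x)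
          else 0) • θ i := by
  haveI : Nonempty (Fin n) := ⟨⟨0, hn⟩⟩
  have hspan : ⊤ ≤ Submodule.span ℝ (Set.range θ) :=
    (hθ.linearIndependent.span_eq_top_of_card_eq_finrank
      (by simp [finrank_euclideanSpace_fin])).ge
  have hx : x = ∑ i : Fin n, proj (θ i) x • θ i := by
    have h := (OrthonormalBasis.mk hθ hspan).sum_repr' x
    simp only [OrthonormalBasis.coe_mk] at h
    calc x = ∑ l : Fin n, (inner ℝ (θ l) x : ℝ) • θ l := h.symm
      _ = ∑ i : Fin n, proj (θ i) x • θ i :=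
        Finset.sum_congr rfl fun l _ => by rw [proj, real_inner_comm]
  nth_rw 1 [hx]
  rw [sliceMap, ← Finset.sum_sub_distrib]
  refine Finset.sum_congr rfl fun i _ => ?_
  by_cases h : (i:ℕ) < j
  · simp only [if_pos h, sub_smul]
  · simp only [if_neg h, sub_self, zero_smul]

lemma lintegral_otMap_sq (hacσ : σ ≪ volume) {θ : Eu n} (hθu : ‖θ‖ = 1) :
    ∫⁻ x, (‖otMap1d (sliceOf σ θ) (sliceOf μ θ) (proj θ x)‖₊ : ℝ≥0∞) ^ 2 ∂σ
      = ∫⁻ x, (‖proj θ x‖₊ : ℝ≥0∞) ^ 2 ∂μ := by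
  haveI := isProbabilityMeasure_sliceOf σ θ
  haveI := isProbabilityMeasure_sliceOf μ θ
  haveI := noAtoms_sliceOf σ hacσ hθu
  have hot : Measurable (otMap1d (sliceOf σ θ) (sliceOf μ θ)) :=
    measurable_otMap1d (μ := sliceOf μ θ) (sliceOf σ θ)
  have h1 : ∫⁻ y, (‖otMap1d (sliceOf σ θ) (sliceOf μ θ) y‖₊ : ℝ≥0∞) ^ 2 ∂(sliceOf σ θ)
      = ∫⁻ x, (‖otMap1d (sliceOf σ θ) (sliceOf μ θ) (proj θ x)‖₊ : ℝ≥0∞) ^ 2 ∂σ :=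
    lintegral_map (hot.nnnorm.coe_nnreal_ennreal.pow_const 2) (measurable_proj θ)
  have hmap : (sliceOf σ θ).map (otMap1d (sliceOf σ θ) (sliceOf μ θ)) = sliceOf μ θ :=
    otMap1d_map (μ := sliceOf μ θ) (sliceOf σ θ)
  have h2 : ∫⁻ z, (‖z‖₊ : ℝ≥0∞) ^ 2 ∂(sliceOf μ θ)
      = ∫⁻ y, (‖otMap1d (sliceOf σ θ) (sliceOf μ θ) y‖₊ : ℝ≥0∞) ^ 2 ∂(sliceOf σ θ) := by
    conv_lhs => rw [← hmap]
    exact lintegral_map (measurable_nnnorm.coe_nnreal_ennreal.pow_const 2) hot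
  have h3 : ∫⁻ z, (‖z‖₊ : ℝ≥0∞) ^ 2 ∂(sliceOf μ θ) = ∫⁻ x, (‖proj θ x‖₊ : ℝ≥0∞) ^ 2 ∂μ :=
    lintegral_map (measurable_nnnorm.coe_nnreal_ennreal.pow_const 2) (measurable_proj θ)
  rw [← h1, ← h2, h3]

lemma memLp_proj (hσ2 : FiniteSecondMoment σ) {θ : Eu n} (hθu : ‖θ‖ = 1) :
    MemLp (fun x => proj θ x) 2 σ := by
  have hid : MemLp (fun x : Eu n => x) 2 σ :=
    (memLp_two_iff_lintegral measurable_id.aestronglyMeasurable).2 hσ2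
  refine MemLp.of_le_mul (c := 1) hid (measurable_proj θ).aestronglyMeasurable
    (Filter.Eventually.of_forall fun x => ?_)
  rw [Real.norm_eq_abs]
  calc |proj θ x| ≤ ‖x‖ * ‖θ‖ := abs_real_inner_le_norm x θ
    _ = 1 * ‖x‖ := by rw [hθu, mul_one, one_mul]

lemma memLp_otMap_comp (hacσ : σ ≪ volume) (hμ2 : FiniteSecondMoment μ)
    {θ : Eu n} (hθu : ‖θ‖ = 1) :
    MemLp (fun x => otMap1d (sliceOf σ θ) (sliceOf μ θ) (proj θ x)) 2 σ := by
  haveI := isProbabilityMeasure_sliceOf σ θ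
  haveI := isProbabilityMeasure_sliceOf μ θ
  have hot : Measurable (otMap1d (sliceOf σ θ) (sliceOf μ θ)) :=
    measurable_otMap1d (μ := sliceOf μ θ) (sliceOf σ θ)
  have hasm : AEStronglyMeasurable (fun x => otMap1d (sliceOf σ θ) (sliceOf μ θ) (proj θ x)) σ :=
    (hot.comp (measurable_proj θ)).aestronglyMeasurable
  refine (memLp_two_iff_lintegral hasm).2 ?_
  rw [lintegral_otMap_sq σ μ hacσ hθu]
  refine lt_of_le_of_lt (lintegral_mono fun x => ?_) hμ2
  have : ‖proj θ x‖₊ ≤ ‖x‖₊ := by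
    rw [← NNReal.coe_le_coe]
    simp only [coe_nnnorm, Real.norm_eq_abs]
    calc |proj θ x| ≤ ‖x‖ * ‖θ‖ := abs_real_inner_le_norm x θ
      _ = ‖x‖ := by rw [hθu, mul_one]
  exact pow_le_pow_left' (ENNReal.coe_le_coe.mpr this) 2

lemma memLp_sub_sliceMap (hacσ : σ ≪ volume) (hσ2 : FiniteSecondMoment σ)
    (hμ2 : FiniteSecondMoment μ) (hn : 0 < n) {θ : Fin n → Eu n} (hθ : Orthonormal ℝ θ)
    (j : ℕ) : MemLp (fun x => x - sliceMap σ μ θ j x) 2 σ := by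
  have hrw : (fun x => x - sliceMap σ μ θ j x)
      = fun x => ∑ i : Fin n, (if (i:ℕ) < j then
            proj (θ i) x - otMap1d (sliceOf σ (θ i)) (sliceOf μ (θ i)) (proj (θ i) x)
          else 0) • θ i := funext fun x => sub_sliceMap_eq σ μ hn hθ j x
  rw [hrw]
  refine memLp_finsetSum Finset.univ fun i _ => ?_
  by_cases h : (i:ℕ) < j
  · simp only [if_pos h]
    exact memLp_smul_const ((memLp_proj σ hσ2 (hθ.1 i)).sub
      (memLp_otMap_comp σ μ hacσ hμ2 (hθ.1 i))) (θ i)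
  · simp only [if_neg h, zero_smul]
    exact memLp_const 0

end NDim2


/-- key estimate for the stochastic gradient descent step. Here `θ` are the
columns of a generic orthogonal matrix `P` and `η` the columns of the matrix `P_k`
used in the iteration step producing `σ_{k+1}`. -/
theorem stmt_11 {n j : ℕ} (hj1 : 1 ≤ j) (hjn : j ≤ n)
    (σk μ : Measure (Eu n)) [IsProbabilityMeasure σk] [IsProbabilityMeasure μ]
    (hacσ : σk ≪ volume) (hacμ : μ ≪ volume)
    (hσ2 : FiniteSecondMoment σk) (hμ2 : FiniteSecondMoment μ)
    (γ : ℝ) (hγ0 : 0 ≤ γ) (hγ1 : γ ≤ 1)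
    (θ η : Fin n → Eu n) (hθ : Orthonormal ℝ θ) (hη : Orthonormal ℝ η) :
    ∑ i : Fin n,
        (if (i : ℕ) < j then
          (W2sq (sliceOf (σk.map (fun x => (1 - γ) • x + γ • sliceMap σk μ η j x)) (θ i))
                (sliceOf μ (θ i))).toReal
         else 0)
      ≤ (∫ x, ‖x - sliceMap σk μ θ j x‖ ^ 2 ∂σk)
        + γ ^ 2 * (∫ x, ‖x - sliceMap σk μ η j x‖ ^ 2 ∂σk)
        - 2 * γ * ∫ x, (inner ℝ (x - sliceMap σk μ θ j x) (x - sliceMap σk μ η j x) : ℝ) ∂σk := by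
  classical
  have hn : 0 < n := lt_of_lt_of_le hj1 hjn
  have hTθm : Measurable (sliceMap σk μ θ j) := measurable_sliceMap σk μ θ j
  have hTηm : Measurable (sliceMap σk μ η j) := measurable_sliceMap σk μ η j
  have hSm : Measurable (fun x : Eu n => (1 - γ) • x + γ • sliceMap σk μ η j x) :=
    (measurable_id.const_smul (1-γ)).add (hTηm.const_smul γ)
  have hGmem : MemLp (fun x => x - sliceMap σk μ θ j x) 2 σk :=
    memLp_sub_sliceMap σk μ hacσ hσ2 hμ2 hn hθ j
  have hHmem : MemLp (fun x => x - sliceMap σk μ η j x) 2 σk :=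
    memLp_sub_sliceMap σk μ hacσ hσ2 hμ2 hn hη j
  have hvmem : MemLp
      (fun x => (x - sliceMap σk μ θ j x) - γ • (x - sliceMap σk μ η j x)) 2 σk :=
    hGmem.sub (hHmem.const_smul γ)
  have hvm : Measurable
      (fun x => (x - sliceMap σk μ θ j x) - γ • (x - sliceMap σk μ η j x)) :=
    (measurable_id.sub hTθm).sub ((measurable_id.sub hTηm).const_smul γ)
  have hSv : ∀ x : Eu n, ((1 - γ) • x + γ • sliceMap σk μ η j x) - sliceMap σk μ θ j x
      = (x - sliceMap σk μ θ j x) - γ • (x - sliceMap σk μ η j x) := by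
    intro x
    rw [sub_smul, one_smul, smul_sub]
    abel
  have hLtop : (∫⁻ x, (‖(x - sliceMap σk μ θ j x) - γ • (x - sliceMap σk μ η j x)‖₊ : ℝ≥0∞) ^ 2 ∂σk) < ⊤ :=
    (memLp_two_iff_lintegral hvmem.aestronglyMeasurable).1 hvmem
  have hAle : ∀ i : Fin n,
      (∫⁻ x, (‖(inner ℝ ((x - sliceMap σk μ θ j x) - γ • (x - sliceMap σk μ η j x)) (θ i) : ℝ)‖₊ : ℝ≥0∞) ^ 2 ∂σk)
        ≤ ∫⁻ x, (‖(x - sliceMap σk μ θ j x) - γ • (x - sliceMap σk μ η j x)‖₊ : ℝ≥0∞) ^ 2 ∂σk := by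
    intro i
    refine lintegral_mono fun x => ?_
    refine pow_le_pow_left' (ENNReal.coe_le_coe.mpr ?_) 2
    rw [← NNReal.coe_le_coe]
    simp only [coe_nnnorm, Real.norm_eq_abs]
    calc |(inner ℝ ((x - sliceMap σk μ θ j x) - γ • (x - sliceMap σk μ η j x)) (θ i) : ℝ)|
        ≤ ‖(x - sliceMap σk μ θ j x) - γ • (x - sliceMap σk μ η j x)‖ * ‖θ i‖ :=
          abs_real_inner_le_norm _ _
      _ = ‖(x - sliceMap σk μ θ j x) - γ • (x - sliceMap σk μ η j x)‖ := by
          rw [hθ.1 i, mul_one]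
  have hkey : ∀ i : Fin n, (i:ℕ) < j →
      W2sq (sliceOf (σk.map (fun x => (1 - γ) • x + γ • sliceMap σk μ η j x)) (θ i))
        (sliceOf μ (θ i))
      ≤ ∫⁻ x, (‖(inner ℝ ((x - sliceMap σk μ θ j x) - γ • (x - sliceMap σk μ η j x)) (θ i) : ℝ)‖₊ : ℝ≥0∞) ^ 2 ∂σk := by
    intro i hi
    haveI := isProbabilityMeasure_sliceOf σk (θ i)
    haveI := isProbabilityMeasure_sliceOf μ (θ i)
    haveI := noAtoms_sliceOf σk hacσ (hθ.1 i)
    have hot : Measurable (otMap1d (sliceOf σk (θ i)) (sliceOf μ (θ i))) :=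
      measurable_otMap1d (μ := sliceOf μ (θ i)) _
    have hFm : Measurable (fun x : Eu n =>
        (proj (θ i) ((1 - γ) • x + γ • sliceMap σk μ η j x), proj (θ i) (sliceMap σk μ θ j x))) :=
      (((measurable_proj _).comp hSm)).prodMk ((measurable_proj _).comp hTθm)
    have hfst : (σk.map (fun x : Eu n =>
        (proj (θ i) ((1 - γ) • x + γ • sliceMap σk μ η j x), proj (θ i) (sliceMap σk μ θ j x)))).map Prod.fst
        = sliceOf (σk.map (fun x => (1 - γ) • x + γ • sliceMap σk μ η j x)) (θ i) := by
      rw [Measure.map_map measurable_fst hFm, sliceOf,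
        Measure.map_map (measurable_proj _) hSm]
      rfl
    have hsnd : (σk.map (fun x : Eu n =>
        (proj (θ i) ((1 - γ) • x + γ • sliceMap σk μ η j x), proj (θ i) (sliceMap σk μ θ j x)))).map Prod.snd
        = sliceOf μ (θ i) := by
      rw [Measure.map_map measurable_snd hFm]
      have hcomp : (Prod.snd ∘ (fun x : Eu n =>
          (proj (θ i) ((1 - γ) • x + γ • sliceMap σk μ η j x), proj (θ i) (sliceMap σk μ θ j x))))
          = fun x => otMap1d (sliceOf σk (θ i)) (sliceOf μ (θ i)) (proj (θ i) x) := by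
        funext x
        simp only [Function.comp_apply]
        rw [proj_sliceMap σk μ hθ j i x, if_pos hi]
      rw [hcomp]
      have heq : σk.map (fun x => otMap1d (sliceOf σk (θ i)) (sliceOf μ (θ i)) (proj (θ i) x))
          = (σk.map (proj (θ i))).map (otMap1d (sliceOf σk (θ i)) (sliceOf μ (θ i))) :=
        (Measure.map_map hot (measurable_proj _)).symm
      rw [heq]
      exact otMap1d_map (μ := sliceOf μ (θ i)) (sliceOf σk (θ i))
    have hW : W2sq (sliceOf (σk.map (fun x => (1 - γ) • x + γ • sliceMap σk μ η j x)) (θ i))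
        (sliceOf μ (θ i))
        ≤ ∫⁻ p, (‖p.1 - p.2‖₊ : ℝ≥0∞) ^ 2 ∂(σk.map (fun x : Eu n =>
            (proj (θ i) ((1 - γ) • x + γ • sliceMap σk μ η j x), proj (θ i) (sliceMap σk μ θ j x)))) := by
      unfold W2sq
      refine le_trans (iInf_le _ _) (iInf_le _ ⟨hfst, hsnd⟩)
    refine le_trans hW ?_
    rw [lintegral_map (f := fun p : ℝ × ℝ => (‖p.1 - p.2‖₊ : ℝ≥0∞) ^ 2) ((measurable_fst.sub measurable_snd).nnnorm.coe_nnreal_ennreal.pow_const 2)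
      hFm]
    refine le_of_eq (lintegral_congr fun x => ?_)
    have hinner : proj (θ i) ((1 - γ) • x + γ • sliceMap σk μ η j x)
        - proj (θ i) (sliceMap σk μ θ j x)
        = (inner ℝ ((x - sliceMap σk μ θ j x) - γ • (x - sliceMap σk μ η j x)) (θ i) : ℝ) := by
      rw [proj, proj, ← inner_sub_left, hSv x]
    simp only
    rw [hinner]
  -- Putting the sum together
  have hstep1 : ∑ i : Fin n,
      (if (i : ℕ) < j then
        (W2sq (sliceOf (σk.map (fun x => (1 - γ) • x + γ • sliceMap σk μ η j x)) (θ i))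
              (sliceOf μ (θ i))).toReal
       else 0)
      ≤ ∑ i : Fin n, (if (i : ℕ) < j then
          (∫⁻ x, (‖(inner ℝ ((x - sliceMap σk μ θ j x) - γ • (x - sliceMap σk μ η j x)) (θ i) : ℝ)‖₊ : ℝ≥0∞) ^ 2 ∂σk)
         else 0).toReal := by
    refine Finset.sum_le_sum fun i _ => ?_
    by_cases h : (i:ℕ) < j
    · simp only [if_pos h]
      exact ENNReal.toReal_mono (((hAle i).trans_lt hLtop).ne) (hkey i h)
    · simp only [if_neg h, ENNReal.toReal_zero, le_refl]
  refine le_trans hstep1 ?_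
  rw [← ENNReal.toReal_sum (by
    intro i _
    by_cases h : (i:ℕ) < j
    · simp only [if_pos h]; exact ((hAle i).trans_lt hLtop).ne
    · simp only [if_neg h]; exact ENNReal.zero_ne_top)]
  have hstep2 : (∑ i : Fin n, (if (i : ℕ) < j then
      (∫⁻ x, (‖(inner ℝ ((x - sliceMap σk μ θ j x) - γ • (x - sliceMap σk μ η j x)) (θ i) : ℝ)‖₊ : ℝ≥0∞) ^ 2 ∂σk)
     else 0))
      ≤ ∫⁻ x, (‖(x - sliceMap σk μ θ j x) - γ • (x - sliceMap σk μ η j x)‖₊ : ℝ≥0∞) ^ 2 ∂σk := by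
    have hrwsum : (∑ i : Fin n, (if (i : ℕ) < j then
        (∫⁻ x, (‖(inner ℝ ((x - sliceMap σk μ θ j x) - γ • (x - sliceMap σk μ η j x)) (θ i) : ℝ)‖₊ : ℝ≥0∞) ^ 2 ∂σk)
       else 0))
        = ∫⁻ x, ∑ i : Fin n, (if (i : ℕ) < j then
            (‖(inner ℝ ((x - sliceMap σk μ θ j x) - γ • (x - sliceMap σk μ η j x)) (θ i) : ℝ)‖₊ : ℝ≥0∞) ^ 2
           else 0) ∂σk := by
      rw [lintegral_finset_sum]
      · refine Finset.sum_congr rfl fun i _ => ?_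
        by_cases h : (i:ℕ) < j
        · simp only [if_pos h]
        · simp only [if_neg h, lintegral_zero]
      · intro i _
        by_cases h : (i:ℕ) < j
        · simp only [if_pos h]
          exact ((hvm.inner measurable_const).nnnorm.coe_nnreal_ennreal.pow_const 2)
        · simp only [if_neg h]
          exact measurable_const
    rw [hrwsum]
    refine lintegral_mono fun x => ?_
    -- pointwise Bessel
    calc ∑ i : Fin n, (if (i : ℕ) < j then
            (‖(inner ℝ ((x - sliceMap σk μ θ j x) - γ • (x - sliceMap σk μ η j x)) (θ i) : ℝ)‖₊ : ℝ≥0∞) ^ 2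
           else 0)
        ≤ ∑ i : Fin n,
            (‖(inner ℝ ((x - sliceMap σk μ θ j x) - γ • (x - sliceMap σk μ η j x)) (θ i) : ℝ)‖₊ : ℝ≥0∞) ^ 2 := by
          refine Finset.sum_le_sum fun i _ => ?_
          by_cases h : (i:ℕ) < j
          · simp only [if_pos h]; exact le_refl _
          · simp only [if_neg h]; exact zero_le
      _ = ENNReal.ofReal (∑ i : Fin n,
            ‖(inner ℝ ((x - sliceMap σk μ θ j x) - γ • (x - sliceMap σk μ η j x)) (θ i) : ℝ)‖ ^ 2) := by
          rw [ENNReal.ofReal_sum_of_nonneg (fun i _ => by positivity)]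
          refine Finset.sum_congr rfl fun i _ => ?_
          rw [ENNReal.ofReal_pow (norm_nonneg _), ofReal_norm, enorm_eq_nnnorm]
      _ ≤ ENNReal.ofReal (‖(x - sliceMap σk μ θ j x) - γ • (x - sliceMap σk μ η j x)‖ ^ 2) := by
          refine ENNReal.ofReal_le_ofReal ?_
          have hb := hθ.sum_inner_products_le (s := Finset.univ)
            ((x - sliceMap σk μ θ j x) - γ • (x - sliceMap σk μ η j x))
          refine le_trans (le_of_eq (Finset.sum_congr rfl fun i _ => ?_)) hb
          rw [real_inner_comm]
      _ = (‖(x - sliceMap σk μ θ j x) - γ • (x - sliceMap σk μ η j x)‖₊ : ℝ≥0∞) ^ 2 := by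
          rw [ENNReal.ofReal_pow (norm_nonneg _), ofReal_norm, enorm_eq_nnnorm]
  refine le_trans (ENNReal.toReal_mono hLtop.ne hstep2) ?_
  -- final identification of the L² norm with the right-hand side
  rw [toReal_lintegral_sq_norm hvmem.aestronglyMeasurable]
  have hpt : ∀ x : Eu n, ‖(x - sliceMap σk μ θ j x) - γ • (x - sliceMap σk μ η j x)‖ ^ 2
      = ‖x - sliceMap σk μ θ j x‖ ^ 2 + γ ^ 2 * ‖x - sliceMap σk μ η j x‖ ^ 2
        - 2 * γ * (inner ℝ (x - sliceMap σk μ θ j x) (x - sliceMap σk μ η j x) : ℝ) := by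
    intro x
    rw [norm_sub_sq_real, real_inner_smul_right, norm_smul, Real.norm_eq_abs, mul_pow, sq_abs]
    ring
  rw [integral_congr_ae (Filter.Eventually.of_forall hpt)]
  have IG : Integrable (fun x => ‖x - sliceMap σk μ θ j x‖ ^ 2) σk :=
    integrable_sq_norm_of_memLp hGmem
  have IH : Integrable (fun x => ‖x - sliceMap σk μ η j x‖ ^ 2) σk :=
    integrable_sq_norm_of_memLp hHmem
  have Iin : Integrable
      (fun x => (inner ℝ (x - sliceMap σk μ θ j x) (x - sliceMap σk μ η j x) : ℝ)) σk :=
    integrable_inner_of_memLp hGmem hHmem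
  have IH' : Integrable (fun x => γ ^ 2 * ‖x - sliceMap σk μ η j x‖ ^ 2) σk :=
    IH.const_mul (γ^2)
  have IGH : Integrable (fun x =>
      ‖x - sliceMap σk μ θ j x‖ ^ 2 + γ ^ 2 * ‖x - sliceMap σk μ η j x‖ ^ 2) σk := IG.add IH'
  have ICin : Integrable (fun x =>
      2 * γ * (inner ℝ (x - sliceMap σk μ θ j x) (x - sliceMap σk μ η j x) : ℝ)) σk :=
    Iin.const_mul (2*γ)
  rw [integral_sub IGH ICin, integral_add IG IH', MeasureTheory.integral_const_mul, MeasureTheory.integral_const_mul]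

end
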